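/- Let $m \geq 2$, let $n_1,\ldots,n_m$ be positive integers with $n_{m+1}=n_1$, and let $r \geq 0$. Define $S(n_1,\ldots,n_m; r, j, q)$ as in the paper. Then $S(n_1,\ldots,n_m; r, 0, q) = S(n_1,\ldots,n_m; r, m, q^{-1}) \cdot q^{n_1 n_2 + n_2 n_3 + \cdots + n_{m-1} n_m - n_1 - 2r}$ as rational functions in $q$. -/
import Mathlib


open Polynomial Finset

/-- The `q`-integer `[n] = 1 + q + ⋯ + q^(n-1)` as a polynomial in `ℤ[q]`. -/
noncomputable def qint (n : ℕ) : Polynomial ℤ := ∑ i ∈ Finset.range n, Polynomial.X ^ i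

/-- The Gaussian binomial coefficient `[n choose k]_q` in `ℤ[q]`, via the `q`-Pascal rule. -/
noncomputable def qbinom : ℕ → ℕ → Polynomial ℤ
  | _, 0 => 1
  | 0, _ + 1 => 0
  | n + 1, k + 1 => qbinom n k + Polynomial.X ^ (k + 1) * qbinom n (k + 1)

/-- `S(n₁,…,n_m; r, j, q)` of the paper, evaluated at `q ∈ ℚ(q)`.  The sequence
`n₁, …, n_m, n_{m+1}` is encoded as `n : ℕ → ℕ` (with the cyclic condition
`n (m+1) = n 1` imposed as a hypothesis in the theorems). -/
noncomputable def Sfun (q : RatFunc ℚ) (m : ℕ) (n : ℕ → ℕ) (r j : ℕ) : RatFunc ℚ :=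
  (Polynomial.aeval q (qint (n 1)))⁻¹ * (Polynomial.aeval q (qbinom (n 1 + n m) (n 1)))⁻¹ *
    ∑ k ∈ Finset.Icc 1 (n 1),
      Polynomial.aeval q (qint (2 * k)) * (Polynomial.aeval q (qint k)) ^ (2 * r) *
        q ^ ((j : ℤ) * (k : ℤ) ^ 2 - ((r : ℤ) + 1) * (k : ℤ)) *
        ∏ i ∈ Finset.Icc 1 m, Polynomial.aeval q (qbinom (n i + n (i + 1)) (n i + k))

lemma qbinom_zero_right (n : ℕ) : qbinom n 0 = 1 := by cases n <;> rfl

lemma qbinom_succ_succ (n k : ℕ) :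
    qbinom (n+1) (k+1) = qbinom n k + Polynomial.X ^ (k + 1) * qbinom n (k + 1) := rfl

lemma qbinom_eq_zero : ∀ n k : ℕ, n < k → qbinom n k = 0
  | 0, _ + 1, _ => rfl
  | n + 1, k + 1, h => by
    rw [qbinom_succ_succ, qbinom_eq_zero n k (by omega), qbinom_eq_zero n (k+1) (by omega)]
    ring

lemma qint_succ (n : ℕ) : qint (n+1) = qint n + Polynomial.X ^ n := Finset.sum_range_succ _ _

lemma qint_succ' (n : ℕ) : qint (n+1) = 1 + Polynomial.X * qint n := by
  rw [qint, qint, Finset.sum_range_succ', Finset.mul_sum]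
  simp [pow_succ, mul_comm, add_comm]

lemma qbinom_one (n : ℕ) : qbinom n 1 = qint n := by
  induction n with
  | zero => simp [qint, qbinom_eq_zero 0 1 (by omega)]
  | succ n ih =>
    rw [show (1:ℕ) = 0 + 1 from rfl, qbinom_succ_succ, qbinom_zero_right, ih, qint_succ']
    simp

lemma qbinom_pascal2 : ∀ n k : ℕ, k ≤ n →
    qbinom (n+1) (k+1) = Polynomial.X ^ (n-k) * qbinom n k + qbinom n (k+1) := by
  intro n
  induction n with
  | zero => intro k hk; interval_cases k; simp [qbinom_succ_succ, qbinom_zero_right,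
      qbinom_eq_zero 0 1 (by omega), qbinom_eq_zero 0 2 (by omega)]
  | succ n ih =>
    intro k hk
    match k with
    | 0 =>
      rw [qbinom_succ_succ, qbinom_zero_right, qbinom_one]
      simp only [zero_add, pow_one, Nat.sub_zero, mul_one]
      rw [← qint_succ', qint_succ (n+1)]
      ring
    | j + 1 =>
      rcases Nat.lt_or_ge j n with hj | hj
      · obtain ⟨a, ha⟩ : ∃ a, n = j + 1 + a := ⟨n - (j+1), by omega⟩
        subst ha
        conv_lhs => rw [qbinom_succ_succ, ih j (by omega), ih (j+1) (by omega)]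
        conv_rhs => rw [qbinom_succ_succ, qbinom_succ_succ]
        rw [show j + 1 + a - j = a + 1 by omega, show j + 1 + a - (j+1) = a by omega,
          show j + 1 + a + 1 - (j + 1) = a + 1 by omega]
        ring
      · have hjn : j = n := by omega
        subst hjn
        rw [qbinom_succ_succ]
        simp [qbinom_eq_zero (j+1) (j+2) (by omega)]

lemma qint_eval_one (n : ℕ) : (qint n).eval 1 = n := by
  simp [qint, Polynomial.eval_finset_sum]

lemma qbinom_eval_one : ∀ n k : ℕ, (qbinom n k).eval 1 = n.choose k
  | _, 0 => by simp [qbinom_zero_right]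
  | 0, k + 1 => by simp [qbinom_eq_zero 0 (k+1) (by omega)]
  | n + 1, k + 1 => by
    rw [qbinom_succ_succ]
    simp [qbinom_eval_one n k, qbinom_eval_one n (k+1), Nat.choose_succ_succ]

lemma qint_ne_zero {n : ℕ} (h : 0 < n) : qint n ≠ 0 := by
  intro hz
  have := qint_eval_one n
  rw [hz] at this
  simp at this
  exact absurd this.symm (by exact_mod_cast h.ne')

lemma qbinom_ne_zero {n k : ℕ} (h : k ≤ n) : qbinom n k ≠ 0 := by
  intro hz
  have := qbinom_eval_one n k
  rw [hz] at this
  simp at this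
  have := Nat.choose_pos h
  omega

lemma aevalX_eq {p : Polynomial ℤ} :
    Polynomial.aeval (RatFunc.X : RatFunc ℚ) p
      = algebraMap (Polynomial ℚ) (RatFunc ℚ) (p.map (algebraMap ℤ ℚ)) := by
  rw [← RatFunc.algebraMap_X, Polynomial.aeval_algebraMap_apply]
  congr 1

lemma aevalX_ne_zero {p : Polynomial ℤ} (hp : p ≠ 0) :
    Polynomial.aeval (RatFunc.X : RatFunc ℚ) p ≠ 0 := by
  rw [aevalX_eq]
  apply RatFunc.algebraMap_ne_zero
  intro h
  exact hp (Polynomial.map_injective (algebraMap ℤ ℚ) (fun a b hab => by exact_mod_cast hab) (by simpa using h))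

section FieldEval

variable {q : RatFunc ℚ}

lemma zpow_collect {K : Type*} [Field K] {q : K} (hq : q ≠ 0) (a b : ℤ) (A : K) :
    q^a * (q^b * A) = q^(a+b) * A := by
  rw [← mul_assoc, ← zpow_add₀ hq]

lemma aeval_inv_qint (hq : q ≠ 0) (N : ℕ) :
    Polynomial.aeval q⁻¹ (qint N) = q ^ (1 - (N:ℤ)) * Polynomial.aeval q (qint N) := by
  rw [qint, map_sum, map_sum, Finset.mul_sum, ← Finset.sum_range_reflect]
  apply Finset.sum_congr rfl
  intro i hi
  have hi' : i < N := Finset.mem_range.mp hi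
  rw [map_pow, map_pow, Polynomial.aeval_X, Polynomial.aeval_X, inv_pow,
    ← zpow_natCast q (N - 1 - i), ← zpow_neg, ← zpow_natCast q i, ← zpow_add₀ hq]
  congr 1
  push_cast [Nat.cast_sub (by omega : 1 + i ≤ N)]
  omega

lemma aeval_inv_qbinom (hq : q ≠ 0) :
    ∀ n k : ℕ, Polynomial.aeval q⁻¹ (qbinom n k)
      = q ^ (-(k:ℤ) * ((n:ℤ) - (k:ℤ))) * Polynomial.aeval q (qbinom n k)
  | n, 0 => by simp [qbinom_zero_right]
  | 0, k + 1 => by simp [qbinom_eq_zero 0 (k+1) (by omega)]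
  | n + 1, k + 1 => by
    rcases Nat.lt_or_ge n k with h | h
    · simp [qbinom_eq_zero (n+1) (k+1) (by omega)]
    · obtain ⟨a, rfl⟩ : ∃ a, n = k + a := ⟨n - k, by omega⟩
      conv_lhs => rw [qbinom_succ_succ]
      conv_rhs => rw [qbinom_pascal2 (k+a) k (by omega)]
      rw [map_add, map_mul, map_pow, Polynomial.aeval_X, map_add,
        aeval_inv_qbinom hq (k+a) k, aeval_inv_qbinom hq (k+a) (k+1),
        map_mul, map_pow, Polynomial.aeval_X, inv_pow, ← zpow_natCast q (k+1), ← zpow_neg,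
        show k + a - k = a by omega, ← zpow_natCast q a]
      rw [mul_add, zpow_collect hq, zpow_collect hq]
      congr 2 <;> · congr 1; push_cast; ring
  termination_by n k => n + k

end FieldEval

lemma prod_zpow_eq {K : Type*} [Field K] {q : K} (hq : q ≠ 0) {ι : Type*} (s : Finset ι)
    (f : ι → ℤ) : ∏ i ∈ s, q ^ f i = q ^ (∑ i ∈ s, f i) := by
  classical
  induction s using Finset.cons_induction with
  | empty => simp
  | cons a s ha ih => rw [Finset.prod_cons, Finset.sum_cons, ih, ← zpow_add₀ hq]

theorem stmt_16 (m : ℕ) (hm : 2 ≤ m) (n : ℕ → ℕ)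
    (hpos : ∀ i ∈ Finset.Icc 1 m, 0 < n i) (hcyc : n (m + 1) = n 1) (r : ℕ) :
    Sfun (RatFunc.X : RatFunc ℚ) m n r 0
      = Sfun ((RatFunc.X : RatFunc ℚ)⁻¹) m n r m *
          (RatFunc.X : RatFunc ℚ) ^
            ((∑ i ∈ Finset.Icc 1 (m - 1), (n i : ℤ) * (n (i + 1) : ℤ))
              - (n 1 : ℤ) - 2 * (r : ℤ)) := by
  have hq : (RatFunc.X : RatFunc ℚ) ≠ 0 := RatFunc.X_ne_zero
  obtain ⟨m', rfl⟩ : ∃ m', m = m' + 1 := ⟨m - 1, by omega⟩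
  simp only [Nat.add_sub_cancel]
  symm
  simp only [Sfun]
  rw [aeval_inv_qint hq (n 1), aeval_inv_qbinom hq, mul_inv, mul_inv, ← zpow_neg, ← zpow_neg]
  have tele : ∀ M : ℕ, ∑ i ∈ Icc 1 M, ((n i : ℤ) - n (i+1)) = (n 1 : ℤ) - n (M+1) := by
    intro M
    induction M with
    | zero => simp
    | succ M ih => rw [Finset.sum_Icc_succ_top (by omega), ih]; ring
  have hB : ∑ i ∈ Icc 1 (m'+1), (n i : ℤ) * n (i+1)
      = (∑ i ∈ Icc 1 m', (n i : ℤ) * n (i+1)) + (n (m'+1) : ℤ) * n 1 := by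
    rw [Finset.sum_Icc_succ_top (by omega), hcyc]
  have hterm : ∀ k ∈ Icc 1 (n 1),
      (Polynomial.aeval (RatFunc.X : RatFunc ℚ)⁻¹) (qint (2 * k)) *
          (Polynomial.aeval (RatFunc.X : RatFunc ℚ)⁻¹) (qint k) ^ (2 * r) *
          (RatFunc.X : RatFunc ℚ)⁻¹ ^ ((Nat.cast (m' + 1) : ℤ) * (k : ℤ) ^ 2 - ((r : ℤ) + 1) * (k : ℤ)) *
          ∏ i ∈ Icc 1 (m' + 1),
            (Polynomial.aeval (RatFunc.X : RatFunc ℚ)⁻¹) (qbinom (n i + n (i + 1)) (n i + k))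
      = (RatFunc.X : RatFunc ℚ) ^
            (-(-(1 - (n 1 : ℤ)) + -(-(n 1 : ℤ) * ((Nat.cast (n 1 + n (m' + 1)) : ℤ) - (n 1 : ℤ)))
              + ((∑ i ∈ Icc 1 m', (n i : ℤ) * (n (i + 1) : ℤ)) - (n 1 : ℤ) - 2 * (r : ℤ)))) *
          ((Polynomial.aeval (RatFunc.X : RatFunc ℚ)) (qint (2 * k)) *
            (Polynomial.aeval (RatFunc.X : RatFunc ℚ)) (qint k) ^ (2 * r) *
            (RatFunc.X : RatFunc ℚ) ^ ((Nat.cast (0:ℕ) : ℤ) * (k : ℤ) ^ 2 - ((r : ℤ) + 1) * (k : ℤ)) *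
            ∏ i ∈ Icc 1 (m' + 1),
              (Polynomial.aeval (RatFunc.X : RatFunc ℚ)) (qbinom (n i + n (i + 1)) (n i + k))) := by
    intro k hk
    simp only [aeval_inv_qint hq, aeval_inv_qbinom hq]
    rw [mul_pow, inv_zpow, ← zpow_neg, Finset.prod_mul_distrib, prod_zpow_eq hq,
      ← zpow_natCast ((RatFunc.X : RatFunc ℚ) ^ ((1 : ℤ) - (k:ℤ))) (2*r), ← zpow_mul]
    have hPk : ∑ i ∈ Icc 1 (m' + 1),
        -(↑(n i + k) : ℤ) * (↑(n i + n (i + 1)) - ↑(n i + k))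
        = -(∑ i ∈ Icc 1 (m'+1), (n i : ℤ) * n (i+1)) + (↑(m'+1) : ℤ) * (k:ℤ)^2 := by
      rw [Finset.sum_congr rfl (fun i _ => show
          -(↑(n i + k) : ℤ) * (↑(n i + n (i + 1)) - ↑(n i + k))
            = -((n i : ℤ) * n (i+1)) + (k:ℤ) * ((n i : ℤ) - n (i+1)) + (k:ℤ)^2 from by
        push_cast; ring)]
      rw [Finset.sum_add_distrib, Finset.sum_add_distrib, ← Finset.mul_sum, tele (m'+1),
        hcyc, Finset.sum_neg_distrib, Finset.sum_const, Nat.card_Icc, nsmul_eq_mul]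
      push_cast
      ring
    trans (RatFunc.X : RatFunc ℚ) ^
        ((1 - (↑(2 * k) : ℤ)) + ((1 - (k:ℤ)) * (↑(2 * r) : ℤ)
          + (-((↑(m' + 1) : ℤ) * (k:ℤ) ^ 2 - ((r:ℤ) + 1) * (k:ℤ))
            + ∑ i ∈ Icc 1 (m' + 1), -(↑(n i + k) : ℤ) * (↑(n i + n (i + 1)) - ↑(n i + k))))) *
      ((Polynomial.aeval (RatFunc.X : RatFunc ℚ)) (qint (2 * k)) *
        (Polynomial.aeval (RatFunc.X : RatFunc ℚ)) (qint k) ^ (2 * r) *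
        ∏ i ∈ Icc 1 (m' + 1),
          (Polynomial.aeval (RatFunc.X : RatFunc ℚ)) (qbinom (n i + n (i + 1)) (n i + k)))
    · rw [zpow_add₀ hq, zpow_add₀ hq, zpow_add₀ hq]
      ring
    · rw [show ((1 - (↑(2 * k) : ℤ)) + ((1 - (k:ℤ)) * (↑(2 * r) : ℤ)
          + (-((↑(m' + 1) : ℤ) * (k:ℤ) ^ 2 - ((r:ℤ) + 1) * (k:ℤ))
            + ∑ i ∈ Icc 1 (m' + 1), -(↑(n i + k) : ℤ) * (↑(n i + n (i + 1)) - ↑(n i + k)))))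
          = (-(-(1 - (n 1 : ℤ)) + -(-(n 1 : ℤ) * ((Nat.cast (n 1 + n (m' + 1)) : ℤ) - (n 1 : ℤ)))
              + ((∑ i ∈ Icc 1 m', (n i : ℤ) * (n (i + 1) : ℤ)) - (n 1 : ℤ) - 2 * (r : ℤ))))
            + ((Nat.cast (0:ℕ) : ℤ) * (k : ℤ) ^ 2 - ((r : ℤ) + 1) * (k : ℤ)) from by
        rw [hPk, hB]; push_cast; ring]
      rw [zpow_add₀ hq]
      ring
  rw [Finset.sum_congr rfl hterm, ← Finset.mul_sum]
  have hone : (RatFunc.X : RatFunc ℚ) ^ (-(1 - (n 1 : ℤ)))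
      * ((RatFunc.X : RatFunc ℚ) ^ (-(-(n 1 : ℤ) * ((Nat.cast (n 1 + n (m' + 1)) : ℤ) - (n 1 : ℤ))))
      * ((RatFunc.X : RatFunc ℚ) ^
            (-(-(1 - (n 1 : ℤ)) + -(-(n 1 : ℤ) * ((Nat.cast (n 1 + n (m' + 1)) : ℤ) - (n 1 : ℤ)))
              + ((∑ i ∈ Icc 1 m', (n i : ℤ) * (n (i + 1) : ℤ)) - (n 1 : ℤ) - 2 * (r : ℤ))))
      * (RatFunc.X : RatFunc ℚ) ^
            ((∑ i ∈ Icc 1 m', (n i : ℤ) * (n (i + 1) : ℤ)) - (n 1 : ℤ) - 2 * (r : ℤ)))) = 1 := by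
    rw [← zpow_add₀ hq, ← zpow_add₀ hq, ← zpow_add₀ hq, show (-(1 - (n 1 : ℤ)))
        + ((-(-(n 1 : ℤ) * ((Nat.cast (n 1 + n (m' + 1)) : ℤ) - (n 1 : ℤ))))
        + ((-(-(1 - (n 1 : ℤ)) + -(-(n 1 : ℤ) * ((Nat.cast (n 1 + n (m' + 1)) : ℤ) - (n 1 : ℤ)))
              + ((∑ i ∈ Icc 1 m', (n i : ℤ) * (n (i + 1) : ℤ)) - (n 1 : ℤ) - 2 * (r : ℤ))))
          + ((∑ i ∈ Icc 1 m', (n i : ℤ) * (n (i + 1) : ℤ)) - (n 1 : ℤ) - 2 * (r : ℤ)))) = 0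
      from by ring, zpow_zero]
  linear_combination ((((Polynomial.aeval (RatFunc.X : RatFunc ℚ)) (qint (n 1)))⁻¹ *
      ((Polynomial.aeval (RatFunc.X : RatFunc ℚ)) (qbinom (n 1 + n (m' + 1)) (n 1)))⁻¹) *
    ∑ k ∈ Icc 1 (n 1),
      (Polynomial.aeval (RatFunc.X : RatFunc ℚ)) (qint (2 * k)) *
        (Polynomial.aeval (RatFunc.X : RatFunc ℚ)) (qint k) ^ (2 * r) *
        (RatFunc.X : RatFunc ℚ) ^ ((Nat.cast (0:ℕ) : ℤ) * (k : ℤ) ^ 2 - ((r : ℤ) + 1) * (k : ℤ)) *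
        ∏ i ∈ Icc 1 (m' + 1),
          (Polynomial.aeval (RatFunc.X : RatFunc ℚ)) (qbinom (n i + n (i + 1)) (n i + k))) * hone
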